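/- Let (P_n) be strongly invariant for the system (A) and let h, k be growth rates. The pair (A,P) is (h,k)-dichotomic if and only if there exist a sequence of norms 𝒩 = {|||·|||_n : n ∈ ℕ} compatible with (P_n) and a nondecreasing sequence s : ℕ → [1,∞) such that h_m|||A_m^n P_n x|||_m ≤ s_n h_n|||x|||_n and k_m|||B_m^n Q_m x|||_n ≤ s_m k_n|||x|||_m for all m ≥ n and all x ∈ X. -/

import Mathlib

open ContinuousLinearMap Filter

noncomputable section

variable {X : Type*} [NormedAddCommGroup X] [NormedSpace ℝ X]

/-- The evolution operator `A_m^n` associated to the linear difference system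
`x_{n+1} = A_n x_n`: `A_m^n = A_{m-1} ⋯ A_n` for `m > n` and `A_n^n = I`. -/
def evol (A : ℕ → X →L[ℝ] X) : ℕ → ℕ → X →L[ℝ] X
  | 0, _ => 1
  | m + 1, n => if m + 1 ≤ n then 1 else A m ∘L evol A m n

/-- `P` is a projectors sequence. -/
def ProjSeq (P : ℕ → X →L[ℝ] X) : Prop := ∀ n, P n ∘L P n = P n

/-- The projectors sequence `P` is invariant for the system `(A)`. -/
def InvariantFor (A P : ℕ → X →L[ℝ] X) : Prop := ∀ n, A n ∘L P n = P (n + 1) ∘L A n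

/-- The projectors sequence `P` is strongly invariant for the system `(A)`: it is invariant and
the restriction of `A_m^n` to `Ker P_n` is an isomorphism from `Ker P_n` onto `Ker P_m`. -/
def StronglyInvariantFor (A P : ℕ → X →L[ℝ] X) : Prop :=
  InvariantFor A P ∧ ∀ m n : ℕ, n ≤ m →
    Set.BijOn (evol A m n) (LinearMap.ker (P n : X →ₗ[ℝ] X) : Set X)
      (LinearMap.ker (P m : X →ₗ[ℝ] X) : Set X)

/-- A growth rate: an increasing sequence with values in `[1, ∞)` tending to `∞`. -/
def IsGrowthRate (h : ℕ → ℝ) : Prop :=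
  StrictMono h ∧ (∀ n, 1 ≤ h n) ∧ Tendsto h atTop atTop

/-- The pair `(A, P)` is `(h,k)`-dichotomic. -/
def Dichotomic (A P : ℕ → X →L[ℝ] X) (h k : ℕ → ℝ) : Prop :=
  ∃ d : ℕ → ℝ, (∀ n, 1 ≤ d n) ∧ Monotone d ∧
    ∀ m n : ℕ, n ≤ m → ∀ x : X,
      h m * ‖evol A m n (P n x)‖ ≤ d n * (h n * ‖P n x‖) ∧
      k m * ‖(1 - P n) x‖ ≤ d m * (k n * ‖evol A m n ((1 - P n) x)‖)

/-- The pair `(A, P)` is uniformly `(h,k)`-dichotomic. -/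
def UniformDichotomic (A P : ℕ → X →L[ℝ] X) (h k : ℕ → ℝ) : Prop :=
  ∃ d : ℝ, 1 ≤ d ∧
    ∀ m n : ℕ, n ≤ m → ∀ x : X,
      h m * ‖evol A m n (P n x)‖ ≤ d * (h n * ‖P n x‖) ∧
      k m * ‖(1 - P n) x‖ ≤ d * (k n * ‖evol A m n ((1 - P n) x)‖)

/-- The pair `(A, P)` has `(h,k)`-growth. -/
def HasGrowth (A P : ℕ → X →L[ℝ] X) (h k : ℕ → ℝ) : Prop :=
  ∃ g : ℕ → ℝ, (∀ n, 1 ≤ g n) ∧ Monotone g ∧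
    ∀ m n : ℕ, n ≤ m → ∀ x : X,
      h n * ‖evol A m n (P n x)‖ ≤ g n * (h m * ‖P n x‖) ∧
      k n * ‖(1 - P n) x‖ ≤ g m * (k m * ‖evol A m n ((1 - P n) x)‖)

/-- `N` is a sequence of norms on `X`. -/
def IsNormSeq (N : ℕ → X → ℝ) : Prop :=
  ∀ n, (∀ x y, N n (x + y) ≤ N n x + N n y) ∧
    (∀ (a : ℝ) (x : X), N n (a • x) = |a| * N n x) ∧
    (∀ x, N n x = 0 ↔ x = 0)

/-- The sequence of norms `N` is compatible with the projectors sequence `P`. -/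
def NormsCompatible (N : ℕ → X → ℝ) (P : ℕ → X →L[ℝ] X) : Prop :=
  IsNormSeq N ∧ ∃ c : ℕ → ℝ, (∀ n, 1 ≤ c n) ∧ Monotone c ∧
    ∀ (n : ℕ) (x : X), ‖x‖ ≤ N n x ∧ N n x ≤ c n * (‖P n x‖ + ‖(1 - P n) x‖)

/-- The defining properties of the skew-evolution operator `B` associated to the pair `(A, P)`:
`A_m^n B_m^n Q_m = Q_m`, `B_m^n A_m^n Q_n = Q_n` and `B_m^n Q_m = Q_n B_m^n Q_m` for `m ≥ n`,
where `Q_n = I - P_n`. -/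
def SkewEvol (A P : ℕ → X →L[ℝ] X) (B : ℕ → ℕ → X →L[ℝ] X) : Prop :=
  ∀ m n : ℕ, n ≤ m →
    evol A m n ∘L (B m n ∘L (1 - P m)) = 1 - P m ∧
    B m n ∘L (evol A m n ∘L (1 - P n)) = 1 - P n ∧
    B m n ∘L (1 - P m) = (1 - P n) ∘L (B m n ∘L (1 - P m))

lemma evol_self (A : ℕ → X →L[ℝ] X) (n : ℕ) : evol A n n = 1 := by
  cases n with
  | zero => rfl
  | succ m =>
    show (if m + 1 ≤ m + 1 then 1 else A m ∘L evol A m (m + 1)) = 1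
    rw [if_pos le_rfl]

lemma evol_succ (A : ℕ → X →L[ℝ] X) {m n : ℕ} (hmn : n ≤ m) :
    evol A (m + 1) n = A m ∘L evol A m n := by
  show (if m + 1 ≤ n then 1 else A m ∘L evol A m n) = A m ∘L evol A m n
  rw [if_neg (by omega)]

lemma evol_comm_P {A P : ℕ → X →L[ℝ] X} (hInv : InvariantFor A P)
    {m n : ℕ} (hmn : n ≤ m) : evol A m n ∘L P n = P m ∘L evol A m n := by
  induction m, hmn using Nat.le_induction with
  | base => rw [evol_self]; ext x; simp
  | succ m hm ih =>
    rw [evol_succ A hm, ContinuousLinearMap.comp_assoc, ih,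
        ← ContinuousLinearMap.comp_assoc, hInv m, ContinuousLinearMap.comp_assoc]

lemma evol_comm_P_apply {A P : ℕ → X →L[ℝ] X} (hInv : InvariantFor A P)
    {m n : ℕ} (hmn : n ≤ m) (x : X) : evol A m n (P n x) = P m (evol A m n x) :=
  DFunLike.congr_fun (evol_comm_P hInv hmn) x

theorem stmt_13 [CompleteSpace X] (A P : ℕ → X →L[ℝ] X) (B : ℕ → ℕ → X →L[ℝ] X)
    (hP : ProjSeq P) (hSI : StronglyInvariantFor A P) (hB : SkewEvol A P B)
    (h k : ℕ → ℝ) (hh : IsGrowthRate h) (hk : IsGrowthRate k) :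
    Dichotomic A P h k ↔
      ∃ N : ℕ → X → ℝ, NormsCompatible N P ∧
        ∃ s : ℕ → ℝ, (∀ n, 1 ≤ s n) ∧ Monotone s ∧
          ∀ m n : ℕ, n ≤ m → ∀ x : X,
            h m * N m (evol A m n (P n x)) ≤ s n * (h n * N n x) ∧
            k m * N n (B m n ((1 - P m) x)) ≤ s m * (k n * N m x) := by
  have hQ : ∀ (n : ℕ) (x : X), (1 - P n) x = x - P n x := by
    intro n x; simp [ContinuousLinearMap.sub_apply]
  have hPP : ∀ (n : ℕ) (x : X), P n (P n x) = P n x := fun n x =>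
    DFunLike.congr_fun (hP n) x
  have hInv := hSI.1
  constructor
  · rintro ⟨d, hd1, hdmono, hdich⟩
    refine ⟨fun n x => ‖P n x‖ + ‖(1 - P n) x‖, ⟨?_, ?_⟩, d, hd1, hdmono, ?_⟩
    · intro n
      refine ⟨fun x y => ?_, fun a x => ?_, fun x => ?_⟩
      · show ‖P n (x + y)‖ + ‖(1 - P n) (x + y)‖ ≤ _
        simp only [map_add]
        have h1 := norm_add_le (P n x) (P n y)
        have h2 := norm_add_le ((1 - P n) x) ((1 - P n) y)
        show _ ≤ (‖P n x‖ + ‖(1 - P n) x‖) + (‖P n y‖ + ‖(1 - P n) y‖)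
        linarith
      · show ‖P n (a • x)‖ + ‖(1 - P n) (a • x)‖ = |a| * (‖P n x‖ + ‖(1 - P n) x‖)
        simp only [map_smul, norm_smul, Real.norm_eq_abs]
        ring
      · constructor
        · intro hx
          have hx' : ‖P n x‖ + ‖(1 - P n) x‖ = 0 := hx
          have h1 : ‖P n x‖ = 0 := by
            have := norm_nonneg (P n x); have := norm_nonneg ((1 - P n) x); linarith
          have h2 : ‖(1 - P n) x‖ = 0 := by
            have := norm_nonneg (P n x); have := norm_nonneg ((1 - P n) x); linarith
          have e1 : P n x = 0 := norm_eq_zero.mp h1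
          have e2 : x - P n x = 0 := by rw [← hQ]; exact norm_eq_zero.mp h2
          have e3 : x = P n x := sub_eq_zero.mp e2
          rw [e3, e1]
        · rintro rfl
          show ‖P n 0‖ + ‖(1 - P n) (0 : X)‖ = 0
          simp
    · refine ⟨fun _ => 1, fun _ => le_refl 1, monotone_const, fun n x => ⟨?_, ?_⟩⟩
      · have e : x = P n x + (x - P n x) := by abel
        calc ‖x‖ = ‖P n x + (x - P n x)‖ := by rw [← e]
          _ ≤ ‖P n x‖ + ‖x - P n x‖ := norm_add_le _ _
          _ = ‖P n x‖ + ‖(1 - P n) x‖ := by rw [hQ]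
      · show ‖P n x‖ + ‖(1 - P n) x‖ ≤ 1 * (‖P n x‖ + ‖(1 - P n) x‖)
        rw [one_mul]
    · intro m n hmn x
      have hhm : (1 : ℝ) ≤ h m := hh.2.1 m
      have hhn : (1 : ℝ) ≤ h n := hh.2.1 n
      have hkn : (1 : ℝ) ≤ k n := hk.2.1 n
      have hdn : (1 : ℝ) ≤ d n := hd1 n
      have hdm : (1 : ℝ) ≤ d m := hd1 m
      constructor
      · have e0 : P m (evol A m n (P n x)) = evol A m n (P n x) := by
          rw [← evol_comm_P_apply hInv hmn, hPP]
        have e1 : (1 - P m) (evol A m n (P n x)) = 0 := by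
          rw [hQ, e0, sub_self]
        have hd := (hdich m n hmn x).1
        have hle : ‖P n x‖ ≤ ‖P n x‖ + ‖(1 - P n) x‖ :=
          le_add_of_nonneg_right (norm_nonneg _)
        have t2 : d n * (h n * ‖P n x‖) ≤ d n * (h n * (‖P n x‖ + ‖(1 - P n) x‖)) :=
          mul_le_mul_of_nonneg_left
            (mul_le_mul_of_nonneg_left hle (by linarith)) (by linarith)
        show h m * (‖P m (evol A m n (P n x))‖ + ‖(1 - P m) (evol A m n (P n x))‖) ≤
          d n * (h n * (‖P n x‖ + ‖(1 - P n) x‖))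
        rw [e0, e1, norm_zero, add_zero]
        linarith
      · set y := B m n ((1 - P m) x) with hy
        have hBy : (1 - P n) y = y := by
          have e := DFunLike.congr_fun (hB m n hmn).2.2 x
          simp only [ContinuousLinearMap.comp_apply] at e
          exact e.symm
        have hPy : P n y = 0 := by
          have e := hQ n y; rw [hBy] at e
          exact sub_eq_self.mp e.symm
        have hAy : evol A m n y = (1 - P m) x := by
          have e := DFunLike.congr_fun (hB m n hmn).1 x
          simp only [ContinuousLinearMap.comp_apply] at e
          exact e
        have hdi := (hdich m n hmn y).2
        rw [hBy, hAy] at hdi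
        have hle : ‖(1 - P m) x‖ ≤ ‖P m x‖ + ‖(1 - P m) x‖ :=
          le_add_of_nonneg_left (norm_nonneg _)
        have t2 : d m * (k n * ‖(1 - P m) x‖) ≤ d m * (k n * (‖P m x‖ + ‖(1 - P m) x‖)) :=
          mul_le_mul_of_nonneg_left
            (mul_le_mul_of_nonneg_left hle (by linarith)) (by linarith)
        show k m * (‖P n y‖ + ‖(1 - P n) y‖) ≤ d m * (k n * (‖P m x‖ + ‖(1 - P m) x‖))
        rw [hPy, norm_zero, zero_add, hBy]
        linarith
  · rintro ⟨N, ⟨hNorm, c, hc1, hcmono, hcomp⟩, s, hs1, hsmono, hineq⟩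
    refine ⟨fun n => s n * c n, fun n => ?_, ?_, ?_⟩
    · show (1:ℝ) ≤ s n * c n
      nlinarith [hs1 n, hc1 n]
    · intro a b hab
      exact mul_le_mul (hsmono hab) (hcmono hab)
        (le_trans zero_le_one (hc1 a)) (le_trans zero_le_one (hs1 b))
    · intro m n hmn x
      have hhm : (1 : ℝ) ≤ h m := hh.2.1 m
      have hhn : (1 : ℝ) ≤ h n := hh.2.1 n
      have hkn : (1 : ℝ) ≤ k n := hk.2.1 n
      have hkm : (1 : ℝ) ≤ k m := hk.2.1 m
      constructor
      · have key := (hineq m n hmn (P n x)).1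
        rw [hPP] at key
        have hnm1 : ‖evol A m n (P n x)‖ ≤ N m (evol A m n (P n x)) := (hcomp m _).1
        have hnm2 : N n (P n x) ≤ c n * (‖P n (P n x)‖ + ‖(1 - P n) (P n x)‖) := (hcomp n _).2
        have e1 : (1 - P n) (P n x) = 0 := by rw [hQ, hPP, sub_self]
        rw [e1, norm_zero, add_zero, hPP] at hnm2
        have t1 : h m * ‖evol A m n (P n x)‖ ≤ h m * N m (evol A m n (P n x)) :=
          mul_le_mul_of_nonneg_left hnm1 (by linarith)
        have t2 : s n * (h n * N n (P n x)) ≤ s n * (h n * (c n * ‖P n x‖)) :=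
          mul_le_mul_of_nonneg_left
            (mul_le_mul_of_nonneg_left hnm2 (by linarith))
            (by linarith [hs1 n])
        show h m * ‖evol A m n (P n x)‖ ≤ s n * c n * (h n * ‖P n x‖)
        nlinarith [t1, t2, key]
      · set z := evol A m n ((1 - P n) x) with hz
        have hPz : P m z = 0 := by
          rw [hz, ← evol_comm_P_apply hInv hmn]
          have e : P n ((1 - P n) x) = 0 := by rw [hQ, map_sub, hPP, sub_self]
          rw [e, map_zero]
        have hQz : (1 - P m) z = z := by rw [hQ, hPz, sub_zero]
        have hBz : B m n ((1 - P m) z) = (1 - P n) x := by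
          rw [hQz]
          have e := DFunLike.congr_fun (hB m n hmn).2.1 x
          simp only [ContinuousLinearMap.comp_apply] at e
          exact e
        have key := (hineq m n hmn z).2
        rw [hBz] at key
        have hn1 : ‖(1 - P n) x‖ ≤ N n ((1 - P n) x) := (hcomp n _).1
        have hn2 : N m z ≤ c m * (‖P m z‖ + ‖(1 - P m) z‖) := (hcomp m _).2
        rw [hPz, norm_zero, zero_add, hQz] at hn2
        have t1 : k m * ‖(1 - P n) x‖ ≤ k m * N n ((1 - P n) x) :=
          mul_le_mul_of_nonneg_left hn1 (by linarith)
        have t2 : s m * (k n * N m z) ≤ s m * (k n * (c m * ‖z‖)) :=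
          mul_le_mul_of_nonneg_left
            (mul_le_mul_of_nonneg_left hn2 (by linarith))
            (by linarith [hs1 m])
        show k m * ‖(1 - P n) x‖ ≤ s m * c m * (k n * ‖z‖)
        nlinarith [t1, t2, key]

end
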